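/- Let (X,d) be a metric space, let p ≥ 1 be a real number, and let k ≥ 1 be an integer. The latent Wasserstein discrepancy W_p^L satisfies: (i) W_p^L(μ,ν) ≥ 0 for all finitely supported probability measures μ, ν on X; (ii) W_p^L(μ,ν) = W_p^L(ν,μ) for all such μ, ν; and (iii) there exists a constant κ > 0 (one may take κ = 2·4^{1−1/p}) such that for all finitely supported probability measures μ, ν, ζ on X, W_p^L(μ,ν) ≤ κ·max{W_p^L(μ,ζ), W_p^L(ζ,ν)}. -/

import Mathlib

open scoped BigOperators

/-- A finitely supported probability measure on `X`, given by its weight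
function (nonnegative, finite support, total mass one). -/
structure FinProb (X : Type*) where
  w : X → ℝ
  nonneg : ∀ x, 0 ≤ w x
  finite : (Function.support w).Finite
  total : ∑ᶠ x, w x = 1

variable {X : Type*} [MetricSpace X]

/-- `P` is a coupling of `α` and `β`: entrywise nonnegative, finitely
supported, with row marginals `α` and column marginals `β`. -/
def IsCoupling (α β : FinProb X) (P : X → X → ℝ) : Prop :=
  (∀ x y, 0 ≤ P x y) ∧ (Function.support (Function.uncurry P)).Finite ∧
  (∀ x, ∑ᶠ y, P x y = α.w x) ∧ (∀ y, ∑ᶠ x, P x y = β.w y)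

/-- The transport cost `Σ_{x,y} d(x,y)^p · P x y` of a plan `P` (real exponent `p`). -/
noncomputable def transportCost (p : ℝ) (P : X → X → ℝ) : ℝ :=
  ∑ᶠ x, ∑ᶠ y, dist x y ^ p * P x y

/-- `W_p^p(α,β)`: the optimal transport cost with ground cost `d^p` between
finitely supported probability measures. -/
noncomputable def Wpp (p : ℝ) (α β : FinProb X) : ℝ :=
  sInf {c : ℝ | ∃ P : X → X → ℝ, IsCoupling α β P ∧ c = transportCost p P}

/-- The latent optimal transport cost with (at most) `k` anchors on each side:
`OT^L(μ,ν) = inf { W_p^p(μ,μ_z) + W_p^p(μ_z,ν_z) + W_p^p(ν_z,ν) }`, the infimum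
over finitely supported probability measures `μ_z, ν_z` supported on at most
`k` points. -/
noncomputable def OTL (p : ℝ) (k : ℕ) (μ ν : FinProb X) : ℝ :=
  sInf {c : ℝ | ∃ μz νz : FinProb X,
    μz.finite.toFinset.card ≤ k ∧ νz.finite.toFinset.card ≤ k ∧
    c = Wpp p μ μz + Wpp p μz νz + Wpp p νz ν}

/-- The latent Wasserstein discrepancy `W_p^L := (OT^L)^(1/p)`. -/
noncomputable def WpL (p : ℝ) (k : ℕ) (μ ν : FinProb X) : ℝ :=
  OTL p k μ ν ^ (1 / p)

namespace LatentOT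

open Function
open scoped Classical
set_option linter.unusedSectionVars false

/-! ### finsum helper lemmas -/

lemma finsum_eq_sum' (f : X → ℝ) (s : Finset X) (h : ∀ x ∉ s, f x = 0) :
    ∑ᶠ x, f x = ∑ x ∈ s, f x :=
  finsum_eq_sum_of_support_subset f (fun x hx => by
    by_contra hxs; exact hx (h x hxs))

/-- A finset covering both coordinates of the support of a plan. -/
noncomputable def cover {P : X → X → ℝ} (h : (Function.support (Function.uncurry P)).Finite) :
    Finset X :=
  h.toFinset.image Prod.fst ∪ h.toFinset.image Prod.snd

lemma cover_spec {P : X → X → ℝ} (h : (Function.support (Function.uncurry P)).Finite) {x y : X}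
    (hxy : x ∉ cover h ∨ y ∉ cover h) : P x y = 0 := by
  by_contra hP
  have hm : (x, y) ∈ h.toFinset := by
    rw [Set.Finite.mem_toFinset]
    exact hP
  have hx : x ∈ cover h := Finset.mem_union_left _ (Finset.mem_image_of_mem Prod.fst hm)
  have hy : y ∈ cover h := Finset.mem_union_right _ (Finset.mem_image_of_mem Prod.snd hm)
  tauto

lemma FinProb.sum_w (α : FinProb X) : ∑ x ∈ α.finite.toFinset, α.w x = 1 := by
  rw [← α.total]
  exact (finsum_eq_sum' _ _ fun x hx => of_not_not fun h => hx (α.finite.mem_toFinset.2 h)).symm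

section coupling

variable {p : ℝ} {α β : FinProb X} {P : X → X → ℝ} {s : Finset X}

lemma row_sum (hc : IsCoupling α β P) (hz : ∀ x y, x ∉ s ∨ y ∉ s → P x y = 0) (x : X) :
    ∑ y ∈ s, P x y = α.w x := by
  rw [← hc.2.2.1 x, finsum_eq_sum' _ s (fun y hy => hz x y (Or.inr hy))]

lemma col_sum (hc : IsCoupling α β P) (hz : ∀ x y, x ∉ s ∨ y ∉ s → P x y = 0) (y : X) :
    ∑ x ∈ s, P x y = β.w y := by
  rw [← hc.2.2.2 y, finsum_eq_sum' _ s (fun x hx => hz x y (Or.inl hx))]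

lemma cost_sum (hz : ∀ x y, x ∉ s ∨ y ∉ s → P x y = 0) :
    transportCost p P = ∑ x ∈ s, ∑ y ∈ s, dist x y ^ p * P x y := by
  unfold transportCost
  rw [finsum_eq_sum' _ s (fun x hx => by
    have h0 : ∀ y, dist x y ^ p * P x y = 0 := fun y => by
      rw [hz x y (Or.inl hx), mul_zero]
    calc ∑ᶠ y, dist x y ^ p * P x y = ∑ᶠ _ : X, (0:ℝ) := finsum_congr h0
      _ = 0 := finsum_zero)]
  exact Finset.sum_congr rfl fun x _ =>
    finsum_eq_sum' _ s fun y hy => by rw [hz x y (Or.inr hy), mul_zero]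

lemma transportCost_nonneg (hP : ∀ x y, 0 ≤ P x y) : 0 ≤ transportCost p P :=
  finsum_nonneg fun x => finsum_nonneg fun y =>
    mul_nonneg (Real.rpow_nonneg dist_nonneg _) (hP x y)

end coupling

/-! ### basic facts about `Wpp` -/

section Wpp

variable {p : ℝ} {α β : FinProb X}

def Wset (p : ℝ) (α β : FinProb X) : Set ℝ :=
  {c : ℝ | ∃ P : X → X → ℝ, IsCoupling α β P ∧ c = transportCost p P}

lemma Wpp_eq : Wpp p α β = sInf (Wset p α β) := rfl

lemma Wset_nonneg {c : ℝ} (hc : c ∈ Wset p α β) : 0 ≤ c := by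
  obtain ⟨P, hP, rfl⟩ := hc
  exact transportCost_nonneg hP.1

lemma Wpp_nonneg : 0 ≤ Wpp p α β :=
  Real.sInf_nonneg fun _ hc => Wset_nonneg hc

lemma Wset_bddBelow : BddBelow (Wset p α β) :=
  ⟨0, fun _ hc => Wset_nonneg hc⟩

lemma prodCoupling (α β : FinProb X) : IsCoupling α β fun x y => α.w x * β.w y := by
  refine ⟨fun x y => mul_nonneg (α.nonneg x) (β.nonneg y), ?_, ?_, ?_⟩
  · refine Set.Finite.subset (α.finite.prod β.finite) ?_
    rintro ⟨x, y⟩ h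
    have h' : α.w x * β.w y ≠ 0 := h
    exact ⟨fun h0 => h' (by rw [h0, zero_mul]), fun h0 => h' (by rw [h0, mul_zero])⟩
  · intro x
    rw [finsum_eq_sum' _ β.finite.toFinset (fun y hy => by
      have h0 : β.w y = 0 := of_not_not fun h => hy (β.finite.mem_toFinset.2 h)
      simp [h0]),
      ← Finset.mul_sum, FinProb.sum_w, mul_one]
  · intro y
    rw [finsum_eq_sum' _ α.finite.toFinset (fun x hx => by
      have h0 : α.w x = 0 := of_not_not fun h => hx (α.finite.mem_toFinset.2 h)
      simp [h0]),
      ← Finset.sum_mul, FinProb.sum_w, one_mul]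

lemma Wset_nonempty (α β : FinProb X) : (Wset p α β).Nonempty :=
  ⟨_, _, prodCoupling α β, rfl⟩

lemma Wpp_le {P : X → X → ℝ} (h : IsCoupling α β P) : Wpp p α β ≤ transportCost p P :=
  csInf_le Wset_bddBelow ⟨P, h, rfl⟩

lemma exists_coupling_lt {ε : ℝ} (hε : 0 < ε) :
    ∃ P : X → X → ℝ, IsCoupling α β P ∧ transportCost p P < Wpp p α β + ε := by
  obtain ⟨c, ⟨P, hP, rfl⟩, hlt⟩ := Real.lt_sInf_add_pos (Wset_nonempty α β (p := p)) hε
  exact ⟨P, hP, hlt⟩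

lemma coupling_swap {P : X → X → ℝ} (h : IsCoupling α β P) :
    IsCoupling β α (flip P) := by
  obtain ⟨h1, h2, h3, h4⟩ := h
  refine ⟨fun y x => h1 x y, ?_, h4, h3⟩
  refine Set.Finite.subset (h2.image Prod.swap) ?_
  rintro ⟨y, x⟩ hyx
  exact ⟨(x, y), hyx, rfl⟩

lemma transportCost_flip {P : X → X → ℝ} (h : (Function.support (Function.uncurry P)).Finite) :
    transportCost p (flip P) = transportCost p P := by
  have hz : ∀ x y, x ∉ cover h ∨ y ∉ cover h → P x y = 0 := fun x y hxy => cover_spec h hxy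
  have hz' : ∀ y x, y ∉ cover h ∨ x ∉ cover h → flip P y x = 0 := fun y x hyx => by
    exact hz x y (Or.symm hyx)
  rw [cost_sum hz, cost_sum hz']
  rw [Finset.sum_comm]
  exact Finset.sum_congr rfl fun x _ => Finset.sum_congr rfl fun y _ => by
    rw [dist_comm]; rfl

lemma Wpp_comm (α β : FinProb X) : Wpp p α β = Wpp p β α := by
  rw [Wpp_eq, Wpp_eq]
  congr 1
  ext c
  constructor
  · rintro ⟨P, hP, rfl⟩
    exact ⟨flip P, coupling_swap hP, (transportCost_flip hP.2.1).symm⟩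
  · rintro ⟨P, hP, rfl⟩
    exact ⟨flip P, coupling_swap hP, (transportCost_flip hP.2.1).symm⟩

end Wpp

/-! ### gluing and the triangle inequality -/

lemma glue {p : ℝ} (hp : 1 ≤ p) {α β γ : FinProb X} {P Q : X → X → ℝ}
    (hP : IsCoupling α β P) (hQ : IsCoupling β γ Q) :
    ∃ R : X → X → ℝ, IsCoupling α γ R ∧
      transportCost p R ^ (1/p) ≤ transportCost p P ^ (1/p) + transportCost p Q ^ (1/p) := by
  have hp0 : (0:ℝ) < p := lt_of_lt_of_le zero_lt_one hp
  set s : Finset X := cover hP.2.1 ∪ cover hQ.2.1 with hsdef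
  have hPz : ∀ x y, x ∉ s ∨ y ∉ s → P x y = 0 := by
    intro x y h
    apply cover_spec hP.2.1
    rcases h with h | h
    · exact Or.inl fun hx => h (Finset.mem_union_left _ hx)
    · exact Or.inr fun hy => h (Finset.mem_union_left _ hy)
  have hQz : ∀ y z, y ∉ s ∨ z ∉ s → Q y z = 0 := by
    intro y z h
    apply cover_spec hQ.2.1
    rcases h with h | h
    · exact Or.inl fun hy => h (Finset.mem_union_right _ hy)
    · exact Or.inr fun hz => h (Finset.mem_union_right _ hz)
  have hβP : ∀ y, β.w y = 0 → ∀ x, P x y = 0 := by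
    intro y hy x
    by_cases hxs : x ∈ s
    · have hsum : ∑ x ∈ s, P x y = 0 := by rw [col_sum hP hPz y, hy]
      exact (Finset.sum_eq_zero_iff_of_nonneg (fun i _ => hP.1 i y)).1 hsum x hxs
    · exact hPz x y (Or.inl hxs)
  have hβQ : ∀ y, β.w y = 0 → ∀ z, Q y z = 0 := by
    intro y hy z
    by_cases hzs : z ∈ s
    · have hsum : ∑ z ∈ s, Q y z = 0 := by rw [row_sum hQ hQz y, hy]
      exact (Finset.sum_eq_zero_iff_of_nonneg (fun i _ => hQ.1 y i)).1 hsum z hzs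
    · exact hQz y z (Or.inr hzs)
  set tri : X → X → X → ℝ :=
    fun x y z => if β.w y = 0 then 0 else P x y * Q y z / β.w y with htri
  have htri_nonneg : ∀ x y z, 0 ≤ tri x y z := by
    intro x y z
    simp only [htri]
    split
    · exact le_refl 0
    · exact div_nonneg (mul_nonneg (hP.1 x y) (hQ.1 y z)) (β.nonneg y)
  have htri_zero : ∀ x y z, x ∉ s ∨ y ∉ s ∨ z ∉ s → tri x y z = 0 := by
    intro x y z h
    simp only [htri]
    split
    · rfl
    · rcases h with h | h | h
      · rw [hPz x y (Or.inl h), zero_mul, zero_div]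
      · rw [hPz x y (Or.inr h), zero_mul, zero_div]
      · rw [hQz y z (Or.inr h), mul_zero, zero_div]
  have hsum_z : ∀ x y, ∑ z ∈ s, tri x y z = P x y := by
    intro x y
    by_cases hb : β.w y = 0
    · simp only [htri, if_pos hb]
      rw [Finset.sum_const_zero, hβP y hb x]
    · simp only [htri, if_neg hb]
      rw [← Finset.sum_div, ← Finset.mul_sum, row_sum hQ hQz y,
        mul_div_assoc, div_self hb, mul_one]
  have hsum_x : ∀ y z, ∑ x ∈ s, tri x y z = Q y z := by
    intro y z
    by_cases hb : β.w y = 0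
    · simp only [htri, if_pos hb]
      rw [Finset.sum_const_zero, hβQ y hb z]
    · simp only [htri, if_neg hb]
      rw [← Finset.sum_div, ← Finset.sum_mul, col_sum hP hPz y,
        mul_comm, mul_div_assoc, div_self hb, mul_one]
  set R : X → X → ℝ := fun x z => ∑ y ∈ s, tri x y z with hR
  have hRnonneg : ∀ x z, 0 ≤ R x z := fun x z =>
    Finset.sum_nonneg fun y _ => htri_nonneg x y z
  have hRz : ∀ x z, x ∉ s ∨ z ∉ s → R x z = 0 := by
    intro x z h
    apply Finset.sum_eq_zero
    intro y _
    rcases h with h | h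
    · exact htri_zero x y z (Or.inl h)
    · exact htri_zero x y z (Or.inr (Or.inr h))
  have hRcoupling : IsCoupling α γ R := by
    refine ⟨hRnonneg, ?_, ?_, ?_⟩
    · refine Set.Finite.subset (s ×ˢ s).finite_toSet ?_
      rintro ⟨x, z⟩ hxz
      have hne : R x z ≠ 0 := hxz
      by_contra hmem
      apply hne
      apply hRz
      simp only [Finset.coe_product, Set.mem_prod] at hmem
      tauto
    · intro x
      rw [finsum_eq_sum' _ s (fun z hz => hRz x z (Or.inr hz))]
      calc ∑ z ∈ s, ∑ y ∈ s, tri x y z = ∑ y ∈ s, ∑ z ∈ s, tri x y z := Finset.sum_comm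
        _ = ∑ y ∈ s, P x y := Finset.sum_congr rfl fun y _ => hsum_z x y
        _ = α.w x := row_sum hP hPz x
    · intro z
      rw [finsum_eq_sum' _ s (fun x hx => hRz x z (Or.inl hx))]
      calc ∑ x ∈ s, ∑ y ∈ s, tri x y z = ∑ y ∈ s, ∑ x ∈ s, tri x y z := Finset.sum_comm
        _ = ∑ y ∈ s, Q y z := Finset.sum_congr rfl fun y _ => hsum_x y z
        _ = γ.w z := col_sum hQ hQz z
  refine ⟨R, hRcoupling, ?_⟩
  -- cost bound
  set T : Finset (X × X × X) := s ×ˢ s ×ˢ s with hT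
  set f : X × X × X → ℝ :=
    fun i => dist i.1 i.2.1 * tri i.1 i.2.1 i.2.2 ^ (1/p) with hf
  set g : X × X × X → ℝ :=
    fun i => dist i.2.1 i.2.2 * tri i.1 i.2.1 i.2.2 ^ (1/p) with hg
  have hrpow_inv : ∀ x y z, (tri x y z ^ (1/p)) ^ p = tri x y z := by
    intro x y z
    rw [← Real.rpow_mul (htri_nonneg x y z), one_div_mul_cancel (ne_of_gt hp0), Real.rpow_one]
  have hfp : ∀ i : X × X × X, f i ^ p = dist i.1 i.2.1 ^ p * tri i.1 i.2.1 i.2.2 := by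
    intro i
    rw [hf]
    rw [Real.mul_rpow dist_nonneg (Real.rpow_nonneg (htri_nonneg _ _ _) _),
      hrpow_inv]
  have hgp : ∀ i : X × X × X, g i ^ p = dist i.2.1 i.2.2 ^ p * tri i.1 i.2.1 i.2.2 := by
    intro i
    rw [hg]
    rw [Real.mul_rpow dist_nonneg (Real.rpow_nonneg (htri_nonneg _ _ _) _),
      hrpow_inv]
  have hfgp : ∀ i : X × X × X,
      (f i + g i) ^ p = (dist i.1 i.2.1 + dist i.2.1 i.2.2) ^ p * tri i.1 i.2.1 i.2.2 := by
    intro i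
    have : f i + g i = (dist i.1 i.2.1 + dist i.2.1 i.2.2) * tri i.1 i.2.1 i.2.2 ^ (1/p) := by
      rw [hf, hg]; ring
    rw [this, Real.mul_rpow (add_nonneg dist_nonneg dist_nonneg)
      (Real.rpow_nonneg (htri_nonneg _ _ _) _), hrpow_inv]
  have hsumT : ∀ F : X × X × X → ℝ,
      ∑ i ∈ T, F i = ∑ x ∈ s, ∑ y ∈ s, ∑ z ∈ s, F (x, y, z) := by
    intro F
    rw [hT, Finset.sum_product]
    exact Finset.sum_congr rfl fun x _ => Finset.sum_product _ _ _
  have hsum_fp : ∑ i ∈ T, f i ^ p = transportCost p P := by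
    rw [hsumT, cost_sum hPz]
    refine Finset.sum_congr rfl fun x _ => Finset.sum_congr rfl fun y _ => ?_
    rw [← hsum_z x y, Finset.mul_sum]
    exact Finset.sum_congr rfl fun z _ => hfp (x, y, z)
  have hsum_gp : ∑ i ∈ T, g i ^ p = transportCost p Q := by
    rw [hsumT, cost_sum hQz]
    have : ∀ x ∈ s, ∀ y ∈ s, ∑ z ∈ s, g (x, y, z) ^ p
        = ∑ z ∈ s, dist y z ^ p * tri x y z :=
      fun x _ y _ => Finset.sum_congr rfl fun z _ => hgp (x, y, z)
    calc ∑ x ∈ s, ∑ y ∈ s, ∑ z ∈ s, g (x, y, z) ^ p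
        = ∑ x ∈ s, ∑ y ∈ s, ∑ z ∈ s, dist y z ^ p * tri x y z :=
          Finset.sum_congr rfl fun x hx => Finset.sum_congr rfl fun y hy => this x hx y hy
      _ = ∑ y ∈ s, ∑ x ∈ s, ∑ z ∈ s, dist y z ^ p * tri x y z := Finset.sum_comm
      _ = ∑ y ∈ s, ∑ z ∈ s, ∑ x ∈ s, dist y z ^ p * tri x y z :=
          Finset.sum_congr rfl fun y _ => Finset.sum_comm
      _ = ∑ y ∈ s, ∑ z ∈ s, dist y z ^ p * Q y z := by
          refine Finset.sum_congr rfl fun y _ => Finset.sum_congr rfl fun z _ => ?_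
          rw [← Finset.mul_sum, hsum_x y z]
  have hcostR : transportCost p R ≤ ∑ i ∈ T, (f i + g i) ^ p := by
    have h1 : transportCost p R = ∑ x ∈ s, ∑ z ∈ s, ∑ y ∈ s, dist x z ^ p * tri x y z := by
      rw [cost_sum hRz]
      exact Finset.sum_congr rfl fun x _ => Finset.sum_congr rfl fun z _ => Finset.mul_sum _ _ _
    have h2 : ∑ i ∈ T, (f i + g i) ^ p
        = ∑ x ∈ s, ∑ z ∈ s, ∑ y ∈ s, (dist x y + dist y z) ^ p * tri x y z := by
      rw [hsumT]
      refine Finset.sum_congr rfl fun x _ => ?_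
      rw [Finset.sum_comm]
      exact Finset.sum_congr rfl fun z _ => Finset.sum_congr rfl fun y _ => hfgp (x, y, z)
    rw [h1, h2]
    refine Finset.sum_le_sum fun x _ => Finset.sum_le_sum fun z _ =>
      Finset.sum_le_sum fun y _ => ?_
    exact mul_le_mul_of_nonneg_right
      (Real.rpow_le_rpow dist_nonneg (dist_triangle x y z) (le_of_lt hp0))
      (htri_nonneg x y z)
  have hmink := Real.Lp_add_le_of_nonneg (s := T) (f := f) (g := g) hp
    (fun i _ => mul_nonneg dist_nonneg (Real.rpow_nonneg (htri_nonneg _ _ _) _))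
    (fun i _ => mul_nonneg dist_nonneg (Real.rpow_nonneg (htri_nonneg _ _ _) _))
  rw [hsum_fp, hsum_gp] at hmink
  refine le_trans ?_ hmink
  exact Real.rpow_le_rpow (transportCost_nonneg hRnonneg) hcostR
    (le_of_lt (one_div_pos.mpr hp0))

lemma le_of_forall_pos_le_add'' {a b : ℝ} (h : ∀ ε > 0, a ≤ b + ε) : a ≤ b := by
  by_contra hab
  push_neg at hab
  have := h ((a - b) / 2) (by linarith)
  linarith

lemma real_rpow_add_le_add_rpow {a b e : ℝ} (ha : 0 ≤ a) (hb : 0 ≤ b) (he0 : 0 ≤ e)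
    (he1 : e ≤ 1) : (a + b) ^ e ≤ a ^ e + b ^ e := by
  lift a to NNReal using ha
  lift b to NNReal using hb
  have h := NNReal.rpow_add_le_add_rpow a b he0 he1
  exact_mod_cast h

lemma Wp_triangle {p : ℝ} (hp : 1 ≤ p) (α β γ : FinProb X) :
    Wpp p α γ ^ (1/p) ≤ Wpp p α β ^ (1/p) + Wpp p β γ ^ (1/p) := by
  have hp0 : (0:ℝ) < p := lt_of_lt_of_le zero_lt_one hp
  have e0 : (0:ℝ) ≤ 1/p := le_of_lt (one_div_pos.mpr hp0)
  have e1 : 1/p ≤ 1 := by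
    rw [div_le_one hp0]; exact hp
  refine le_of_forall_pos_le_add'' fun ε hε => ?_
  have hε2 : (0:ℝ) < (ε/2) ^ p := Real.rpow_pos_of_pos (by linarith) p
  obtain ⟨P, hPc, hPlt⟩ := exists_coupling_lt (α := α) (β := β) (p := p) hε2
  obtain ⟨Q, hQc, hQlt⟩ := exists_coupling_lt (α := β) (β := γ) (p := p) hε2
  obtain ⟨R, hRc, hRle⟩ := glue hp hPc hQc
  have hhalf : (((ε/2) ^ p) ^ (1/p)) = ε/2 := by
    rw [← Real.rpow_mul (by linarith : (0:ℝ) ≤ ε/2), mul_one_div, div_self hp0.ne',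
      Real.rpow_one]
  have hP2 : transportCost p P ^ (1/p) ≤ Wpp p α β ^ (1/p) + ε/2 := by
    have h1 := Real.rpow_le_rpow (transportCost_nonneg hPc.1) (le_of_lt hPlt) e0
    have h2 := real_rpow_add_le_add_rpow (Wpp_nonneg (p := p) (α := α) (β := β))
      (le_of_lt hε2) e0 e1
    rw [hhalf] at h2
    exact le_trans h1 h2
  have hQ2 : transportCost p Q ^ (1/p) ≤ Wpp p β γ ^ (1/p) + ε/2 := by
    have h1 := Real.rpow_le_rpow (transportCost_nonneg hQc.1) (le_of_lt hQlt) e0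
    have h2 := real_rpow_add_le_add_rpow (Wpp_nonneg (p := p) (α := β) (β := γ))
      (le_of_lt hε2) e0 e1
    rw [hhalf] at h2
    exact le_trans h1 h2
  have h0 : Wpp p α γ ^ (1/p) ≤ transportCost p R ^ (1/p) :=
    Real.rpow_le_rpow Wpp_nonneg (Wpp_le hRc) e0
  linarith

/-! ### facts about `OTL` -/

section OTLsec

variable {p : ℝ} {k : ℕ} {μ ν : FinProb X}

def Oset (p : ℝ) (k : ℕ) (μ ν : FinProb X) : Set ℝ :=
  {c : ℝ | ∃ μz νz : FinProb X,
    μz.finite.toFinset.card ≤ k ∧ νz.finite.toFinset.card ≤ k ∧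
    c = Wpp p μ μz + Wpp p μz νz + Wpp p νz ν}

lemma OTL_eq : OTL p k μ ν = sInf (Oset p k μ ν) := rfl

lemma Oset_nonneg {c : ℝ} (hc : c ∈ Oset p k μ ν) : 0 ≤ c := by
  obtain ⟨μz, νz, -, -, rfl⟩ := hc
  exact add_nonneg (add_nonneg Wpp_nonneg Wpp_nonneg) Wpp_nonneg

lemma OTL_nonneg : 0 ≤ OTL p k μ ν :=
  Real.sInf_nonneg fun _ hc => Oset_nonneg hc

lemma Oset_bddBelow : BddBelow (Oset p k μ ν) :=
  ⟨0, fun _ hc => Oset_nonneg hc⟩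

lemma OTL_comm : OTL p k μ ν = OTL p k ν μ := by
  rw [OTL_eq, OTL_eq]
  congr 1
  ext c
  constructor
  · rintro ⟨μz, νz, h1, h2, rfl⟩
    refine ⟨νz, μz, h2, h1, ?_⟩
    rw [Wpp_comm ν νz, Wpp_comm νz μz, Wpp_comm μz μ]
    ring
  · rintro ⟨μz, νz, h1, h2, rfl⟩
    refine ⟨νz, μz, h2, h1, ?_⟩
    rw [Wpp_comm μ νz, Wpp_comm νz μz, Wpp_comm μz ν]
    ring

noncomputable def dirac (x0 : X) : FinProb X where
  w := fun x => if x = x0 then 1 else 0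
  nonneg x := by split <;> norm_num
  finite := Set.Finite.subset (Set.finite_singleton x0) fun x hx => by
    by_contra hne
    exact hx (if_neg (by simpa using hne))
  total := by
    rw [finsum_eq_sum' _ {x0} (fun x hx => if_neg (by simpa using hx))]
    simp

lemma dirac_card (x0 : X) : (dirac x0).finite.toFinset.card ≤ 1 := by
  have hsub : (dirac x0).finite.toFinset ⊆ {x0} := fun x hx => by
    have hx' : (dirac x0).w x ≠ 0 := (dirac x0).finite.mem_toFinset.1 hx
    simp only [Finset.mem_singleton]
    by_contra hne
    exact hx' (if_neg hne)
  calc (dirac x0).finite.toFinset.card ≤ ({x0} : Finset X).card := Finset.card_le_card hsub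
    _ = 1 := Finset.card_singleton x0

lemma FinProb.exists_pt (μ : FinProb X) : ∃ x0 : X, μ.w x0 ≠ 0 := by
  by_contra h
  push_neg at h
  have h0 : ∑ᶠ x, μ.w x = 0 := by
    have hw : μ.w = fun _ => 0 := funext h
    rw [hw]
    exact finsum_zero
  rw [μ.total] at h0
  exact one_ne_zero h0

lemma Oset_nonempty (hk : 1 ≤ k) (μ ν : FinProb X) : (Oset p k μ ν).Nonempty := by
  obtain ⟨x0, -⟩ := FinProb.exists_pt μ
  exact ⟨_, dirac x0, dirac x0, le_trans (dirac_card x0) hk,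
    le_trans (dirac_card x0) hk, rfl⟩

lemma OTL_le {c : ℝ} (hc : c ∈ Oset p k μ ν) : OTL p k μ ν ≤ c :=
  csInf_le Oset_bddBelow hc

lemma exists_anchors_lt (hk : 1 ≤ k) {ε : ℝ} (hε : 0 < ε) :
    ∃ μz νz : FinProb X, μz.finite.toFinset.card ≤ k ∧ νz.finite.toFinset.card ≤ k ∧
      Wpp p μ μz + Wpp p μz νz + Wpp p νz ν < OTL p k μ ν + ε := by
  obtain ⟨c, ⟨μz, νz, h1, h2, rfl⟩, hlt⟩ :=
    Real.lt_sInf_add_pos (Oset_nonempty hk μ ν (p := p)) hε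
  exact ⟨μz, νz, h1, h2, hlt⟩

end OTLsec

lemma four_term {p : ℝ} (hp : 1 ≤ p) {a b c d : ℝ} (ha : 0 ≤ a) (hb : 0 ≤ b)
    (hc : 0 ≤ c) (hd : 0 ≤ d) :
    (a + b + c + d) ^ p ≤ 4 ^ (p - 1) * (a ^ p + b ^ p + c ^ p + d ^ p) := by
  have h := Real.rpow_sum_le_const_mul_sum_rpow_of_nonneg
    (s := (Finset.univ : Finset (Fin 4))) (f := ![a, b, c, d]) hp
    (by intro i _; fin_cases i <;> assumption)
  simpa [Fin.sum_univ_four] using h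

end LatentOT

open LatentOT

/-- The latent Wasserstein discrepancy is (i) nonnegative, (ii) symmetric, and
(iii) satisfies a quasi-triangle inequality: there is `κ > 0` (one may take
`κ = 2·4^(1−1/p)`) with `W_p^L(μ,ν) ≤ κ·max(W_p^L(μ,ζ), W_p^L(ζ,ν))`. -/
theorem latent_wasserstein_quasimetric (p : ℝ) (hp : 1 ≤ p) (k : ℕ) (hk : 1 ≤ k) :
    (∀ μ ν : FinProb X, 0 ≤ WpL p k μ ν) ∧
    (∀ μ ν : FinProb X, WpL p k μ ν = WpL p k ν μ) ∧
    (∃ κ : ℝ, 0 < κ ∧ ∀ μ ν ζ : FinProb X,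
      WpL p k μ ν ≤ κ * max (WpL p k μ ζ) (WpL p k ζ ν)) := by
  have hp0 : (0:ℝ) < p := lt_of_lt_of_le zero_lt_one hp
  have e0 : (0:ℝ) ≤ 1/p := le_of_lt (one_div_pos.mpr hp0)
  refine ⟨fun μ ν => Real.rpow_nonneg OTL_nonneg _,
    fun μ ν => by simp only [WpL]; rw [OTL_comm], ?_⟩
  set c : ℝ := 4 ^ (p - 1) with hcdef
  have hc1 : (1:ℝ) ≤ c := by
    have : (1:ℝ) = (4:ℝ) ^ (0:ℝ) := (Real.rpow_zero 4).symm
    rw [hcdef, this]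
    exact Real.rpow_le_rpow_of_exponent_le (by norm_num) (by linarith)
  have hc0 : (0:ℝ) < c := lt_of_lt_of_le zero_lt_one hc1
  have key : ∀ μ ν ζ : FinProb X,
      OTL p k μ ν ≤ 2 * c * max (OTL p k μ ζ) (OTL p k ζ ν) := by
    intro μ ν ζ
    have step : OTL p k μ ν ≤ c * (OTL p k μ ζ + OTL p k ζ ν) := by
      refine le_of_forall_pos_le_add'' fun ε hε => ?_
      set δ : ℝ := ε / (2 * c) with hδdef
      have hδ0 : 0 < δ := div_pos hε (by linarith)
      obtain ⟨μz, ζ1, hμzcard, hζ1card, hlt1⟩ :=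
        exists_anchors_lt (μ := μ) (ν := ζ) (p := p) hk hδ0
      obtain ⟨ζ2, νz, hζ2card, hνzcard, hlt2⟩ :=
        exists_anchors_lt (μ := ζ) (ν := ν) (p := p) hk hδ0
      have tri1 := Wp_triangle hp μz ζ1 νz
      have tri2 := Wp_triangle hp ζ1 ζ νz
      have tri3 := Wp_triangle hp ζ ζ2 νz
      have chain : Wpp p μz νz ^ (1/p) ≤
          Wpp p μz ζ1 ^ (1/p) + Wpp p ζ1 ζ ^ (1/p) + Wpp p ζ ζ2 ^ (1/p)
            + Wpp p ζ2 νz ^ (1/p) := by linarith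
      have hinv : ∀ A : ℝ, 0 ≤ A → (A ^ (1/p)) ^ p = A := fun A hA => by
        rw [← Real.rpow_mul hA, one_div_mul_cancel hp0.ne', Real.rpow_one]
      have hmid : Wpp p μz νz ≤
          c * (Wpp p μz ζ1 + Wpp p ζ1 ζ + Wpp p ζ ζ2 + Wpp p ζ2 νz) := by
        have h1 : Wpp p μz νz = (Wpp p μz νz ^ (1/p)) ^ p := (hinv _ Wpp_nonneg).symm
        have h2 : (Wpp p μz νz ^ (1/p)) ^ p ≤
            (Wpp p μz ζ1 ^ (1/p) + Wpp p ζ1 ζ ^ (1/p) + Wpp p ζ ζ2 ^ (1/p)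
              + Wpp p ζ2 νz ^ (1/p)) ^ p :=
          Real.rpow_le_rpow (Real.rpow_nonneg Wpp_nonneg _) chain hp0.le
        have h3 := four_term hp (Real.rpow_nonneg (Wpp_nonneg (p := p) (α := μz) (β := ζ1)) (1/p))
          (Real.rpow_nonneg (Wpp_nonneg (p := p) (α := ζ1) (β := ζ)) (1/p))
          (Real.rpow_nonneg (Wpp_nonneg (p := p) (α := ζ) (β := ζ2)) (1/p))
          (Real.rpow_nonneg (Wpp_nonneg (p := p) (α := ζ2) (β := νz)) (1/p))
        rw [hinv _ Wpp_nonneg, hinv _ Wpp_nonneg, hinv _ Wpp_nonneg,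
          hinv _ Wpp_nonneg] at h3
        calc Wpp p μz νz = (Wpp p μz νz ^ (1/p)) ^ p := h1
          _ ≤ _ := h2
          _ ≤ _ := h3
      have hOTLle : OTL p k μ ν ≤ Wpp p μ μz + Wpp p μz νz + Wpp p νz ν :=
        OTL_le ⟨μz, νz, hμzcard, hνzcard, rfl⟩
      have n1 : 0 ≤ Wpp p μ μz := Wpp_nonneg
      have n2 : 0 ≤ Wpp p νz ν := Wpp_nonneg
      have nA : 0 ≤ Wpp p μz ζ1 := Wpp_nonneg
      have nB : 0 ≤ Wpp p ζ1 ζ := Wpp_nonneg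
      have nC : 0 ≤ Wpp p ζ ζ2 := Wpp_nonneg
      have nD : 0 ≤ Wpp p ζ2 νz := Wpp_nonneg
      have hsplit : OTL p k μ ν ≤
          c * (Wpp p μ μz + Wpp p μz ζ1 + Wpp p ζ1 ζ)
            + c * (Wpp p ζ ζ2 + Wpp p ζ2 νz + Wpp p νz ν) := by
        nlinarith [hOTLle, hmid, hc1, n1, n2, nA, nB, nC, nD]
      have m1 : c * (Wpp p μ μz + Wpp p μz ζ1 + Wpp p ζ1 ζ) ≤ c * (OTL p k μ ζ + δ) :=
        mul_le_mul_of_nonneg_left hlt1.le hc0.le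
      have m2 : c * (Wpp p ζ ζ2 + Wpp p ζ2 νz + Wpp p νz ν) ≤ c * (OTL p k ζ ν + δ) :=
        mul_le_mul_of_nonneg_left hlt2.le hc0.le
      have heq : c * (OTL p k μ ζ + δ) + c * (OTL p k ζ ν + δ)
          = c * (OTL p k μ ζ + OTL p k ζ ν) + 2 * c * δ := by ring
      have hδε : 2 * c * δ = ε := by
        rw [hδdef]
        field_simp
      linarith
    have hmax : OTL p k μ ζ + OTL p k ζ ν ≤
        2 * max (OTL p k μ ζ) (OTL p k ζ ν) := by
      have := le_max_left (OTL p k μ ζ) (OTL p k ζ ν)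
      have := le_max_right (OTL p k μ ζ) (OTL p k ζ ν)
      linarith
    calc OTL p k μ ν ≤ c * (OTL p k μ ζ + OTL p k ζ ν) := step
      _ ≤ c * (2 * max (OTL p k μ ζ) (OTL p k ζ ν)) :=
          mul_le_mul_of_nonneg_left hmax hc0.le
      _ = 2 * c * max (OTL p k μ ζ) (OTL p k ζ ν) := by ring
  refine ⟨(2 * c) ^ (1/p), Real.rpow_pos_of_pos (by linarith) _, fun μ ν ζ => ?_⟩
  set M : ℝ := max (OTL p k μ ζ) (OTL p k ζ ν) with hMdef
  have hM0 : 0 ≤ M := le_trans OTL_nonneg (le_max_left _ _)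
  have h1 : WpL p k μ ν ≤ (2 * c * M) ^ (1/p) := by
    simp only [WpL]
    exact Real.rpow_le_rpow OTL_nonneg (key μ ν ζ) e0
  have h2 : (2 * c * M) ^ (1/p) = (2 * c) ^ (1/p) * M ^ (1/p) :=
    Real.mul_rpow (by linarith) hM0
  have h3 : M ^ (1/p) = max (WpL p k μ ζ) (WpL p k ζ ν) := by
    simp only [WpL]
    rcases le_total (OTL p k μ ζ) (OTL p k ζ ν) with h | h
    · rw [hMdef, max_eq_right h,
        max_eq_right (Real.rpow_le_rpow OTL_nonneg h e0)]
    · rw [hMdef, max_eq_left h,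
        max_eq_left (Real.rpow_le_rpow OTL_nonneg h e0)]
  rw [h2, h3] at h1
  exact h1
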